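/- (Donsker–Varadhan variational formula) For a probability measure P on ℝ^n and any y ∈ ℝ^n with log ∫ e^{⟨y,z⟩} dP(z) finite, one has log ∫ e^{⟨y,z⟩} dP(z) = sup_Q { ∫ ⟨y,z⟩ dQ(z) − D(Q‖P) }, where the supremum is over probability measures Q absolutely continuous with respect to P with finite relative entropy. -/

import Mathlib

open MeasureTheory RealInnerProductSpace Real Filter Topology

lemma kl_nonneg' {α : Type*} [MeasurableSpace α] (μ ν : Measure α)
    [IsProbabilityMeasure μ] [IsProbabilityMeasure ν] (hμν : μ ≪ ν)
    (h_int : Integrable (llr μ ν) μ) : 0 ≤ ∫ x, llr μ ν x ∂μ := by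
  have h1 : ∀ᵐ x ∂μ, 1 - (ν.rnDeriv μ x).toReal ≤ llr μ ν x := by
    filter_upwards [exp_neg_llr hμν] with x hx
    have h := Real.add_one_le_exp (- llr μ ν x)
    rw [hx] at h
    linarith
  have hi : Integrable (fun x => (ν.rnDeriv μ x).toReal) μ :=
    Measure.integrable_toReal_rnDeriv
  have h2 : Integrable (fun x => 1 - (ν.rnDeriv μ x).toReal) μ :=
    (integrable_const 1).sub hi
  have h3 := integral_mono_ae h2 h_int h1
  rw [integral_sub (integrable_const 1) hi] at h3
  have h4 : ∫ x, (ν.rnDeriv μ x).toReal ∂μ ≤ 1 := by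
    have h5 := Measure.setIntegral_toReal_rnDeriv_le (μ := ν) (ν := μ) (s := Set.univ)
      (measure_ne_top ν _)
    rwa [setIntegral_univ, probReal_univ] at h5
  simp only [integral_const, probReal_univ, smul_eq_mul, one_mul, mul_one] at h3
  linarith

lemma gibbs_le {α : Type*} [MeasurableSpace α] (P Q : Measure α)
    [IsProbabilityMeasure P] [IsProbabilityMeasure Q] {f : α → ℝ}
    (hf : Integrable (fun x => Real.exp (f x)) P) (hQP : Q ≪ P)
    (hfQ : Integrable f Q) (hllr : Integrable (llr Q P) Q) :
    ∫ x, f x ∂Q - ∫ x, llr Q P x ∂Q ≤ Real.log (∫ x, Real.exp (f x) ∂P) := by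
  have hprob : IsProbabilityMeasure (P.tilted f) := isProbabilityMeasure_tilted hf
  have heq := integral_llr_tilted_right hQP hfQ hf hllr
  have h0 : 0 ≤ ∫ x, llr Q (P.tilted f) x ∂Q :=
    kl_nonneg' Q (P.tilted f) (hQP.trans (absolutelyContinuous_tilted hf))
      (integrable_llr_tilted_right hQP hfQ hllr hf)
  linarith

/-- Real-valued Kullback–Leibler divergence `D(Q‖P) = ∫ log (dQ/dP) dQ`. -/
noncomputable def klDivR {α : Type*} [MeasurableSpace α] (μ ν : Measure α) : ℝ :=
  ∫ x, Real.log ((μ.rnDeriv ν x).toReal) ∂μ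

/-- Donsker–Varadhan variational formula:
`log ∫ e^{⟪y,z⟫} dP = sup_Q { ∫ ⟪y,z⟫ dQ − D(Q‖P) }`, the supremum over probability
measures `Q ≪ P` with finite relative entropy (and `⟪y,·⟫` integrable). -/
theorem donsker_varadhan {n : ℕ} (P : Measure (EuclideanSpace ℝ (Fin n)))
    [IsProbabilityMeasure P] (y : EuclideanSpace ℝ (Fin n))
    (hint : Integrable (fun z => Real.exp ⟪y, z⟫) P) :
    Real.log (∫ z, Real.exp ⟪y, z⟫ ∂P) =
      sSup {r : ℝ | ∃ Q : Measure (EuclideanSpace ℝ (Fin n)),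
        IsProbabilityMeasure Q ∧ Q ≪ P ∧
        Integrable (fun z => ⟪y, z⟫) Q ∧
        Integrable (fun z => Real.log ((Q.rnDeriv P z).toReal)) Q ∧
        r = (∫ z, ⟪y, z⟫ ∂Q) - klDivR Q P} := by
  set f : EuclideanSpace ℝ (Fin n) → ℝ := fun z => ⟪y, z⟫ with hf_def
  have hf_cont : Continuous f := continuous_const.inner continuous_id
  set S := {r : ℝ | ∃ Q : Measure (EuclideanSpace ℝ (Fin n)),
        IsProbabilityMeasure Q ∧ Q ≪ P ∧
        Integrable (fun z => ⟪y, z⟫) Q ∧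
        Integrable (fun z => Real.log ((Q.rnDeriv P z).toReal)) Q ∧
        r = (∫ z, ⟪y, z⟫ ∂Q) - klDivR Q P} with hS_def
  -- Upper bound: every element of S is ≤ log Z
  have hub : ∀ r ∈ S, r ≤ Real.log (∫ z, Real.exp (f z) ∂P) := by
    rintro r ⟨Q, hQprob, hQP, hfQ, hllrQ, rfl⟩
    have : klDivR Q P = ∫ x, llr Q P x ∂Q := rfl
    rw [this]
    exact gibbs_le P Q hint hQP hfQ hllrQ
  -- Truncations
  set g : ℕ → EuclideanSpace ℝ (Fin n) → ℝ := fun k z => min (f z) k with hg_def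
  have hg_cont : ∀ k, Continuous (g k) := fun k => hf_cont.min continuous_const
  have hg_le : ∀ k z, g k z ≤ f z := fun k z => min_le_left _ _
  have hgk_int : ∀ k, Integrable (fun z => Real.exp (g k z)) P := by
    intro k
    refine hint.mono ((Real.continuous_exp.comp (hg_cont k)).aestronglyMeasurable)
      (ae_of_all _ fun z => ?_)
    rw [Real.norm_eq_abs, Real.norm_eq_abs, abs_of_pos (Real.exp_pos _),
      abs_of_pos (Real.exp_pos _)]
    exact Real.exp_le_exp.mpr (hg_le k z)
  have hZk_pos : ∀ k, 0 < ∫ z, Real.exp (g k z) ∂P := fun k => integral_exp_pos (hgk_int k)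
  have hmem' : ∀ k : ℕ, ∃ r ∈ S, Real.log (∫ z, Real.exp (g k z) ∂P) ≤ r := by
    intro k
    set Zk := ∫ z, Real.exp (g k z) ∂P with hZk_def
    set Q := P.tilted (g k) with hQ_def
    have hQprob : IsProbabilityMeasure Q := isProbabilityMeasure_tilted (hgk_int k)
    have hQP : Q ≪ P := tilted_absolutelyContinuous P (g k)
    -- Integrability of f * exp (g k) wrt P
    have h_fg : Integrable (fun z => f z * Real.exp (g k z)) P := by
      have hbound : Integrable (fun z => 1 + Real.exp k * Real.exp (f z)) P :=
        (integrable_const 1).add (hint.const_mul _)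
      refine hbound.mono ((hf_cont.mul (Real.continuous_exp.comp
        (hg_cont k))).aestronglyMeasurable) (ae_of_all _ fun z => ?_)
      rw [Real.norm_eq_abs, Real.norm_eq_abs, abs_mul, abs_of_pos (Real.exp_pos _)]
      have h1pos : (0:ℝ) ≤ 1 + Real.exp k * Real.exp (f z) := by positivity
      rw [abs_of_nonneg h1pos]
      rcases le_or_gt (f z) 0 with hfz | hfz
      · have hmin : g k z = f z := min_eq_left (hfz.trans (Nat.cast_nonneg k))
        rw [hmin, abs_of_nonpos hfz]
        have h2 : -f z ≤ Real.exp (-f z) := by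
          have := Real.add_one_le_exp (-f z); linarith
        have h3 : -f z * Real.exp (f z) ≤ Real.exp (-f z) * Real.exp (f z) := by
          apply mul_le_mul_of_nonneg_right h2 (Real.exp_pos _).le
        rw [← Real.exp_add, neg_add_cancel, Real.exp_zero] at h3
        nlinarith [Real.exp_pos (f z), Real.exp_pos (k:ℝ),
          mul_pos (Real.exp_pos (k:ℝ)) (Real.exp_pos (f z))]
      · rw [abs_of_pos hfz]
        have h2 : f z ≤ Real.exp (f z) := by
          have := Real.add_one_le_exp (f z); linarith
        have h3 : Real.exp (g k z) ≤ Real.exp (k:ℝ) :=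
          Real.exp_le_exp.mpr (min_le_right _ _)
        nlinarith [Real.exp_pos (g k z), Real.exp_pos (f z)]
    -- Integrability of f wrt Q
    have hfQ : Integrable f Q := by
      rw [hQ_def, Measure.tilted]
      rw [integrable_withDensity_iff (by
        exact (measurable_exp.comp (hg_cont k).measurable).div_const _ |>.ennreal_ofReal)
        (ae_of_all _ fun z => ENNReal.ofReal_lt_top)]
      have heq : (fun z => f z * (ENNReal.ofReal (Real.exp (g k z) / Zk)).toReal)
          = fun z => (f z * Real.exp (g k z)) * Zk⁻¹ := by
        funext z
        rw [ENNReal.toReal_ofReal (by positivity)]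
        field_simp
      rw [heq]
      exact h_fg.mul_const _
    -- llr identification
    have hllr_eq : (fun z => llr Q P z) =ᵐ[Q] fun z => g k z - Real.log Zk := by
      have h := log_rnDeriv_tilted_left_self (μ := P) (f := g k) (hgk_int k)
      exact hQP.ae_le h
    -- Integrability of g k wrt Q
    have hgQ : Integrable (g k) Q := by
      refine (hfQ.abs.add (integrable_const (k:ℝ))).mono
        ((hg_cont k).aestronglyMeasurable) (ae_of_all _ fun z => ?_)
      rw [Real.norm_eq_abs, Real.norm_eq_abs]
      have h1 : |g k z| ≤ |f z| + k := by
        rcases le_or_gt (f z) (k:ℝ) with h | h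
        · rw [show g k z = f z from min_eq_left h]
          have : (0:ℝ) ≤ k := Nat.cast_nonneg k
          linarith
        · rw [show g k z = (k:ℝ) from min_eq_right h.le,
            abs_of_nonneg (Nat.cast_nonneg k)]
          linarith [abs_nonneg (f z)]
      exact h1.trans (le_abs_self _)
    have hllrQ : Integrable (llr Q P) Q := by
      rw [integrable_congr hllr_eq]
      exact hgQ.sub (integrable_const _)
    -- value computation
    have hkl : klDivR Q P = ∫ z, g k z ∂Q - Real.log Zk := by
      have : klDivR Q P = ∫ z, llr Q P z ∂Q := rfl
      rw [this, integral_congr_ae hllr_eq, integral_sub hgQ (integrable_const _),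
        integral_const, probReal_univ, one_smul]
    refine ⟨(∫ z, ⟪y, z⟫ ∂Q) - klDivR Q P, ⟨Q, hQprob, hQP, hfQ, hllrQ, rfl⟩, ?_⟩
    rw [hkl]
    have hge : ∫ z, g k z ∂Q ≤ ∫ z, f z ∂Q :=
      integral_mono hgQ hfQ (fun z => hg_le k z)
    have : (∫ z, ⟪y, z⟫ ∂Q) = ∫ z, f z ∂Q := rfl
    rw [this]
    linarith
  -- S is nonempty and bounded above
  obtain ⟨r0, hr0S, _⟩ := hmem' 0
  have hbdd : BddAbove S := ⟨Real.log (∫ z, Real.exp (f z) ∂P), fun r hr => hub r hr⟩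
  refine le_antisymm ?_ (csSup_le ⟨r0, hr0S⟩ hub)
  -- log Z_k → log Z and each log Z_k ≤ sSup S
  have htend : Tendsto (fun k : ℕ => ∫ z, Real.exp (g k z) ∂P) atTop
      (𝓝 (∫ z, Real.exp (f z) ∂P)) := by
    refine integral_tendsto_of_tendsto_of_monotone hgk_int hint
      (ae_of_all _ fun z => ?_) (ae_of_all _ fun z => ?_)
    · intro a b hab
      exact Real.exp_le_exp.mpr (min_le_min le_rfl (Nat.cast_le.mpr hab))
    · refine tendsto_const_nhds.congr' ?_
      obtain ⟨N, hN⟩ := exists_nat_ge (f z)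
      filter_upwards [Filter.eventually_ge_atTop N] with m hm
      rw [hg_def]
      simp only
      rw [min_eq_left (hN.trans (Nat.cast_le.mpr hm))]
  have hlog_tend : Tendsto (fun k : ℕ => Real.log (∫ z, Real.exp (g k z) ∂P)) atTop
      (𝓝 (Real.log (∫ z, Real.exp (f z) ∂P))) :=
    (Real.continuousAt_log (integral_exp_pos hint).ne').tendsto.comp htend
  refine le_of_tendsto hlog_tend (Filter.Eventually.of_forall fun k => ?_)
  obtain ⟨r, hrS, hr⟩ := hmem' k
  exact hr.trans (le_csSup hbdd hrS)
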